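/- Let (p,f) be an F-allocation such that φ(p,f) < Ψ(F)/(n(m+1)). Then there exists at least one edge (i,g_j) ∈ E∖F with f_{ij} > ‖s(p,f)‖₁ such that i and g_j lie in two different connected components of the undirected bipartite graph (A∪G, F). -/

import Mathlib

/-- `(i, g_j)` is a maximum bang-per-buck (MBB) edge at prices `p`. -/
def IsMBB {n : ℕ} (u : Fin n → Fin n → ℝ) (p : Fin n → ℝ) (i j : Fin n) : Prop :=
  0 < u i j ∧ ∀ k, u i k / p k ≤ u i j / p j

/-- `F`-allocation: positive prices, flow nonnegative outside `F`, support and `F`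
contained in the MBB edges, no agent overspends, and no good is oversold. -/
def IsFAlloc {n : ℕ} (u : Fin n → Fin n → ℝ) (F : Set (Fin n × Fin n))
    (p : Fin n → ℝ) (f : Fin n → Fin n → ℝ) : Prop :=
  (∀ j, 0 < p j) ∧ (∀ i j, (i, j) ∉ F → 0 ≤ f i j) ∧
  (∀ i j, f i j ≠ 0 → IsMBB u p i j) ∧
  (∀ e ∈ F, IsMBB u p e.1 e.2) ∧
  (∀ i, ∑ j, f i j ≤ p i) ∧ (∀ j, ∑ i, f i j ≤ p j)

/-- The potential `φ(p,f) = ‖s(p,f)‖_∞ / (Π_j p_j)^{1/n}`. -/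
noncomputable def phi {n : ℕ} (p : Fin n → ℝ) (f : Fin n → Fin n → ℝ) : ℝ :=
  sSup (Set.range fun j : Fin n => |p j - ∑ i, f i j|) /
    (∏ j, p j) ^ ((1 : ℝ) / n)

/-- `Ψ(F)`: the optimal potential over `F`-allocations supported on `F`. -/
noncomputable def Psi {n : ℕ} (u : Fin n → Fin n → ℝ)
    (F : Set (Fin n × Fin n)) : ℝ :=
  sInf {x : ℝ | ∃ p f, IsFAlloc u F p f ∧
    (∀ i j, f i j ≠ 0 → (i, j) ∈ F) ∧ x = phi p f}

/-- Adjacency of the undirected bipartite graph `(A ∪ G, F)`: agents are `Sum.inl`,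
goods are `Sum.inr`. -/
def bipAdj {n : ℕ} (F : Set (Fin n × Fin n)) (a b : Fin n ⊕ Fin n) : Prop :=
  (∃ i j, (i, j) ∈ F ∧ a = Sum.inl i ∧ b = Sum.inr j) ∨
  (∃ i j, (i, j) ∈ F ∧ a = Sum.inr j ∧ b = Sum.inl i)

lemma reroute {n : ℕ} (F : Set (Fin n × Fin n)) (δ : ℝ) {x y : Fin n ⊕ Fin n}
    (h : Relation.ReflTransGen (bipAdj F) x y) :
    ∃ g : Fin n → Fin n → ℝ,
      (∀ i j, (i, j) ∉ F → g i j = 0) ∧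
      (∀ i, ∑ j, g i j =
        δ * ((if x = Sum.inl i then (1:ℝ) else 0) - (if y = Sum.inl i then 1 else 0))) ∧
      (∀ j, ∑ i, g i j =
        δ * ((if y = Sum.inr j then (1:ℝ) else 0) - (if x = Sum.inr j then 1 else 0))) := by
  classical
  induction h with
  | refl => exact ⟨0, by simp, by simp, by simp⟩
  | @tail y z hxy hstep ih =>
    obtain ⟨g1, hg1z, hg1r, hg1c⟩ := ih
    rcases hstep with ⟨a, b, habF, hy, hz⟩ | ⟨a, b, habF, hy, hz⟩
    · refine ⟨fun i j => g1 i j + (if i = a ∧ j = b then δ else 0),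
        fun i j hij => ?_, fun i => ?_, fun j => ?_⟩
      · have : ¬ (i = a ∧ j = b) := by
          rintro ⟨rfl, rfl⟩; exact hij habF
        simp [hg1z i j hij, this]
      · rw [Finset.sum_add_distrib, hg1r i]
        have h2 : ∑ j, (if i = a ∧ j = b then δ else 0)
            = (if i = a then δ else 0) := by
          by_cases hia : i = a <;> simp [hia]
        rw [h2, hy, hz]
        by_cases hia : i = a <;> by_cases hxi : x = Sum.inl i <;>
          simp_all [eq_comm]
      · rw [Finset.sum_add_distrib, hg1c j]
        have h2 : ∑ i, (if i = a ∧ j = b then δ else 0)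
            = (if j = b then δ else 0) := by
          by_cases hjb : j = b <;> simp [hjb]
        rw [h2, hy, hz]
        by_cases hjb : j = b <;> by_cases hxj : x = Sum.inr j <;>
          simp_all [eq_comm]
    · refine ⟨fun i j => g1 i j + (if i = a ∧ j = b then -δ else 0),
        fun i j hij => ?_, fun i => ?_, fun j => ?_⟩
      · have : ¬ (i = a ∧ j = b) := by
          rintro ⟨rfl, rfl⟩; exact hij habF
        simp [hg1z i j hij, this]
      · rw [Finset.sum_add_distrib, hg1r i]
        have h2 : ∑ j, (if i = a ∧ j = b then -δ else 0)
            = (if i = a then -δ else 0) := by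
          by_cases hia : i = a <;> simp [hia]
        rw [h2, hy, hz]
        by_cases hia : i = a <;> by_cases hxi : x = Sum.inl i <;>
          simp_all [eq_comm]
      · rw [Finset.sum_add_distrib, hg1c j]
        have h2 : ∑ i, (if i = a ∧ j = b then -δ else 0)
            = (if j = b then -δ else 0) := by
          by_cases hjb : j = b <;> simp [hjb]
        rw [h2, hy, hz]
        by_cases hjb : j = b <;> by_cases hxj : x = Sum.inr j <;>
          simp_all [eq_comm]

/-- Lemma (new edge): if `(p,f)` is an `F`-allocation with
`φ(p,f) < Ψ(F)/(n(m+1))`, then some edge `(i,g_j) ∈ E ∖ F` joining two different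
connected components of `(A ∪ G, F)` carries flow `f i j > ‖s(p,f)‖₁`. -/
theorem stmt_13 (n : ℕ) (hn : 0 < n) (u : Fin n → Fin n → ℝ)
    (hu : ∀ i j, 0 ≤ u i j)
    (F : Set (Fin n × Fin n)) (hFE : ∀ e ∈ F, 0 < u e.1 e.2)
    (m : ℕ)
    (hm : m = (Finset.univ.filter
      (fun e : Fin n × Fin n => 0 < u e.1 e.2)).card)
    (p : Fin n → ℝ) (f : Fin n → Fin n → ℝ) (hpf : IsFAlloc u F p f)
    (hφ : phi p f < Psi u F / (n * (m + 1))) :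
    ∃ i j : Fin n, 0 < u i j ∧ (i, j) ∉ F ∧
      (∑ j', (p j' - ∑ i', f i' j')) < f i j ∧
      ¬ Relation.ReflTransGen (bipAdj F) (Sum.inl i) (Sum.inr j) := by
  classical
  by_contra hcon
  push_neg at hcon
  obtain ⟨hp, hfnn, hfmbb, hFmbb, hrow, hcol⟩ := hpf
  set S : ℝ := ∑ j', (p j' - ∑ i', f i' j') with hSdef
  have hs0 : ∀ j, 0 ≤ p j - ∑ i, f i j := fun j => sub_nonneg.2 (hcol j)
  have hS0 : 0 ≤ S := Finset.sum_nonneg fun j _ => hs0 j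
  have hprodpos : 0 < ∏ j, p j := Finset.prod_pos fun j _ => hp j
  set Dn : ℝ := (∏ j, p j) ^ ((1 : ℝ) / n) with hDndef
  have hDn : 0 < Dn := Real.rpow_pos_of_pos hprodpos _
  have j0 : Fin n := ⟨0, hn⟩
  set M : ℝ := sSup (Set.range fun j : Fin n => |p j - ∑ i, f i j|) with hMdef
  have hbdd : BddAbove (Set.range fun j : Fin n => |p j - ∑ i, f i j|) :=
    (Set.finite_range _).bddAbove
  have hMj : ∀ j, p j - ∑ i, f i j ≤ M := fun j =>
    (le_abs_self _).trans (le_csSup hbdd ⟨j, rfl⟩)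
  have hM0 : 0 ≤ M := le_trans (hs0 j0) (hMj j0)
  have hSM : S ≤ n * M := by
    calc S ≤ ∑ _j : Fin n, M := Finset.sum_le_sum fun j _ => hMj j
    _ = n * M := by simp [Finset.sum_const, Finset.card_univ, nsmul_eq_mul]
  -- nonnegativity of phi of any F-allocation
  have hphinn : ∀ (p' : Fin n → ℝ) (f' : Fin n → Fin n → ℝ),
      (∀ j, 0 < p' j) → 0 ≤ phi p' f' := by
    intro p' f' hp'
    unfold phi
    apply div_nonneg
    · have hb : BddAbove (Set.range fun j : Fin n => |p' j - ∑ i, f' i j|) :=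
        (Set.finite_range _).bddAbove
      exact le_trans (abs_nonneg _) (le_csSup hb ⟨j0, rfl⟩)
    · exact (Real.rpow_pos_of_pos (Finset.prod_pos fun j _ => hp' j) _).le
  have hT0 : ∀ x ∈ {x : ℝ | ∃ p f, IsFAlloc u F p f ∧
      (∀ i j, f i j ≠ 0 → (i, j) ∈ F) ∧ x = phi p f}, (0:ℝ) ≤ x := by
    rintro x ⟨p', f', hA, _, rfl⟩
    exact hphinn p' f' hA.1
  have hPsi0 : 0 ≤ Psi u F := Real.sInf_nonneg hT0
  have hcpos : (0:ℝ) < (n : ℝ) * ((m : ℝ) + 1) := by positivity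
  have hPsipos : 0 < Psi u F := by
    have h1 : 0 < Psi u F / ((n : ℝ) * ((m : ℝ) + 1)) :=
      lt_of_le_of_lt (hphinn p f hp) hφ
    have h2 : Psi u F / ((n : ℝ) * ((m : ℝ) + 1)) * ((n : ℝ) * ((m : ℝ) + 1)) = Psi u F :=
      div_mul_cancel₀ _ hcpos.ne'
    rw [← h2]
    exact mul_pos h1 hcpos
  -- condition for rerouting
  set cond : Fin n × Fin n → Prop := fun e => e ∉ F ∧ S < f e.1 e.2 with hconddef
  have key : ∀ e : Fin n × Fin n, ∃ g : Fin n → Fin n → ℝ,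
      (∀ i j, (i, j) ∉ F → g i j = 0) ∧
      (∀ i, ∑ j, g i j = if cond e ∧ e.1 = i then f e.1 e.2 else 0) ∧
      (∀ j, ∑ i, g i j = if cond e ∧ e.2 = j then f e.1 e.2 else 0) := by
    intro e
    by_cases hc : cond e
    · have hfe : S < f e.1 e.2 := hc.2
      have hne0 : f e.1 e.2 ≠ 0 := (lt_of_le_of_lt hS0 hfe).ne'
      have hupos : 0 < u e.1 e.2 := (hfmbb _ _ hne0).1
      have hrtg := hcon e.1 e.2 hupos hc.1 hfe
      obtain ⟨g, h0, h1, h2⟩ := reroute F (f e.1 e.2) hrtg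
      refine ⟨g, h0, fun i => ?_, fun j => ?_⟩
      · rw [h1 i]
        by_cases hei : e.1 = i
        · rw [if_pos (show cond e ∧ e.1 = i from ⟨hc, hei⟩)]; simp [hei]
        · rw [if_neg (show ¬(cond e ∧ e.1 = i) from fun h => hei h.2)]; simp [hei]
      · rw [h2 j]
        by_cases hej : e.2 = j
        · rw [if_pos (show cond e ∧ e.2 = j from ⟨hc, hej⟩)]; simp [hej]
        · rw [if_neg (show ¬(cond e ∧ e.2 = j) from fun h => hej h.2)]; simp [hej]
    · exact ⟨0, by simp, by simp [hc], by simp [hc]⟩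
  choose g hg0 hg1 hg2 using key
  set f' : Fin n → Fin n → ℝ :=
    fun i j => (if (i, j) ∈ F then f i j else 0) + ∑ e, g e i j with hf'def
  have hf'zero : ∀ i j, (i, j) ∉ F → f' i j = 0 := by
    intro i j hij
    simp only [hf'def, if_neg hij]
    rw [Finset.sum_congr rfl fun e _ => hg0 e i j hij]
    simp
  -- row sums
  have hrow' : ∀ i, ∑ j, f' i j
      = ∑ j, (if (i, j) ∈ F ∨ cond (i, j) then f i j else 0) := by
    intro i
    simp only [hf'def]
    rw [Finset.sum_add_distrib, Finset.sum_comm]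
    have h1 : ∑ e : Fin n × Fin n, ∑ j, g e i j
        = ∑ j, (if cond (i, j) then f i j else 0) := by
      rw [Finset.sum_congr rfl fun e _ => hg1 e i]
      rw [Fintype.sum_prod_type]
      rw [Finset.sum_comm]
      refine Finset.sum_congr rfl fun b _ => ?_
      have : ∀ a : Fin n, (if cond (a, b) ∧ (a, b).1 = i then f (a, b).1 (a, b).2 else 0)
          = (if a = i then (if cond (a, b) then f a b else 0) else 0) := by
        intro a
        by_cases h1 : a = i <;> by_cases h2 : cond (a, b) <;> simp [h1, h2]
      rw [Finset.sum_congr rfl fun a _ => this a]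
      simp
    rw [h1, ← Finset.sum_add_distrib]
    refine Finset.sum_congr rfl fun j _ => ?_
    by_cases h1 : (i, j) ∈ F
    · have h2 : ¬ cond (i, j) := fun hc => hc.1 h1
      simp [h1, h2]
    · by_cases h2 : cond (i, j) <;> simp [h1, h2]
  -- column sums
  have hcol' : ∀ j, ∑ i, f' i j
      = ∑ i, (if (i, j) ∈ F ∨ cond (i, j) then f i j else 0) := by
    intro j
    simp only [hf'def]
    rw [Finset.sum_add_distrib, Finset.sum_comm]
    have h1 : ∑ e : Fin n × Fin n, ∑ i, g e i j
        = ∑ i, (if cond (i, j) then f i j else 0) := by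
      rw [Finset.sum_congr rfl fun e _ => hg2 e j]
      rw [Fintype.sum_prod_type]
      refine Finset.sum_congr rfl fun a _ => ?_
      have : ∀ b : Fin n, (if cond (a, b) ∧ (a, b).2 = j then f (a, b).1 (a, b).2 else 0)
          = (if b = j then (if cond (a, b) then f a b else 0) else 0) := by
        intro b
        by_cases h1 : b = j <;> by_cases h2 : cond (a, b) <;> simp [h1, h2]
      rw [Finset.sum_congr rfl fun b _ => this b]
      simp
    rw [h1, ← Finset.sum_add_distrib]
    refine Finset.sum_congr rfl fun i _ => ?_
    by_cases h1 : (i, j) ∈ F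
    · have h2 : ¬ cond (i, j) := fun hc => hc.1 h1
      simp [h1, h2]
    · by_cases h2 : cond (i, j) <;> simp [h1, h2]
  have hsel_le : ∀ i j, (if (i, j) ∈ F ∨ cond (i, j) then f i j else 0) ≤ f i j := by
    intro i j
    by_cases h1 : (i, j) ∈ F ∨ cond (i, j)
    · simp [h1]
    · push_neg at h1
      simp only [if_neg (by tauto : ¬ ((i, j) ∈ F ∨ cond (i, j)))]
      exact hfnn i j h1.1
  have hrowle : ∀ i, ∑ j, f' i j ≤ p i := by
    intro i
    rw [hrow' i]
    exact le_trans (Finset.sum_le_sum fun j _ => hsel_le i j) (hrow i)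
  have hcolle : ∀ j, ∑ i, f' i j ≤ p j := by
    intro j
    rw [hcol' j]
    exact le_trans (Finset.sum_le_sum fun i _ => hsel_le i j) (hcol j)
  have hsupp' : ∀ i j, f' i j ≠ 0 → (i, j) ∈ F := by
    intro i j h
    by_contra hij
    exact h (hf'zero i j hij)
  have hAlloc' : IsFAlloc u F p f' :=
    ⟨hp, fun i j hij => ge_of_eq (hf'zero i j hij),
      fun i j h => hFmbb (i, j) (hsupp' i j h), hFmbb, hrowle, hcolle⟩
  -- cardinality bound
  have hcard : ∀ j : Fin n,
      ((Finset.univ.filter (fun i : Fin n => 0 < u i j)).card : ℝ) ≤ (m : ℝ) := by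
    intro j
    have : (Finset.univ.filter (fun i : Fin n => 0 < u i j)).card
        ≤ (Finset.univ.filter (fun e : Fin n × Fin n => 0 < u e.1 e.2)).card := by
      apply Finset.card_le_card_of_injOn (fun i => (i, j))
      · intro i hi
        simp only [Finset.mem_coe, Finset.mem_filter, Finset.mem_univ, true_and] at hi ⊢
        exact hi
      · intro a _ b _ hab
        simpa using hab
    rw [hm]
    exact_mod_cast this
  -- surplus bound for f'
  have hs'le : ∀ j, p j - ∑ i, f' i j ≤ (1 + (m : ℝ) * n) * M := by
    intro j
    rw [hcol' j]
    have hdrop : ∑ i, (f i j - (if (i, j) ∈ F ∨ cond (i, j) then f i j else 0))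
        ≤ ∑ i, (if 0 < u i j then S else 0) := by
      refine Finset.sum_le_sum fun i _ => ?_
      by_cases h1 : (i, j) ∈ F ∨ cond (i, j)
      · simp only [if_pos h1, sub_self]
        by_cases h2 : 0 < u i j <;> simp [h2, hS0]
      · push_neg at h1
        simp only [if_neg (by tauto : ¬ ((i, j) ∈ F ∨ cond (i, j))), sub_zero]
        by_cases h0 : f i j = 0
        · rw [h0]
          by_cases h2 : 0 < u i j <;> simp [h2, hS0]
        · have hupos : 0 < u i j := (hfmbb i j h0).1
          have : ¬ S < f i j := fun hlt => h1.2 ⟨h1.1, hlt⟩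
          simp [hupos]
          linarith
    have hsum : ∑ i, (if 0 < u i j then S else 0)
        = ((Finset.univ.filter (fun i : Fin n => 0 < u i j)).card : ℝ) * S := by
      rw [Finset.sum_ite]
      simp [Finset.sum_const, nsmul_eq_mul]
    have h3 : ∑ i, (f i j - (if (i, j) ∈ F ∨ cond (i, j) then f i j else 0))
        ≤ (m : ℝ) * ((n : ℝ) * M) := by
      refine le_trans hdrop ?_
      rw [hsum]
      have := hcard j
      have hnM : 0 ≤ (n : ℝ) * M := by positivity
      calc ((Finset.univ.filter (fun i : Fin n => 0 < u i j)).card : ℝ) * S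
          ≤ (m : ℝ) * S := by
            apply mul_le_mul_of_nonneg_right (hcard j) hS0
        _ ≤ (m : ℝ) * ((n : ℝ) * M) := by
            apply mul_le_mul_of_nonneg_left hSM (by positivity)
    have h4 : ∑ i, (f i j - (if (i, j) ∈ F ∨ cond (i, j) then f i j else 0))
        = ∑ i, f i j - ∑ i, (if (i, j) ∈ F ∨ cond (i, j) then f i j else 0) :=
      Finset.sum_sub_distrib _ _
    have h5 := hMj j
    rw [h4] at h3
    have : (1 + (m : ℝ) * n) * M = M + (m : ℝ) * ((n : ℝ) * M) := by ring
    rw [this]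
    linarith
  have hs'0 : ∀ j, 0 ≤ p j - ∑ i, f' i j := fun j => sub_nonneg.2 (hcolle j)
  -- phi bound
  have hphis : phi p f' ≤ (1 + (m : ℝ) * n) * phi p f := by
    have e1 : phi p f' = sSup (Set.range fun j : Fin n => |p j - ∑ i, f' i j|) / Dn := rfl
    have e2 : phi p f = M / Dn := rfl
    rw [e1, e2]
    have hnum : sSup (Set.range fun j : Fin n => |p j - ∑ i, f' i j|)
        ≤ (1 + (m : ℝ) * n) * M := by
      refine csSup_le ⟨_, ⟨j0, rfl⟩⟩ ?_
      rintro b ⟨j, rfl⟩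
      show |p j - ∑ i, f' i j| ≤ _
      rw [abs_of_nonneg (hs'0 j)]
      exact hs'le j
    calc sSup (Set.range fun j : Fin n => |p j - ∑ i, f' i j|) / Dn
        ≤ ((1 + (m : ℝ) * n) * M) / Dn := (div_le_div_iff_of_pos_right hDn).mpr hnum
      _ = (1 + (m : ℝ) * n) * (M / Dn) := by ring
  -- membership and contradiction
  have hmem : phi p f' ∈ {x : ℝ | ∃ p f, IsFAlloc u F p f ∧
      (∀ i j, f i j ≠ 0 → (i, j) ∈ F) ∧ x = phi p f} :=
    ⟨p, f', hAlloc', hsupp', rfl⟩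
  have hPsile : Psi u F ≤ phi p f' := csInf_le ⟨0, fun x hx => hT0 x hx⟩ hmem
  have hstrict : (1 + (m : ℝ) * n) * phi p f
      < (1 + (m : ℝ) * n) * (Psi u F / ((n : ℝ) * ((m : ℝ) + 1))) := by
    apply mul_lt_mul_of_pos_left hφ (by positivity)
  have hfinal : (1 + (m : ℝ) * n) * (Psi u F / ((n : ℝ) * ((m : ℝ) + 1))) ≤ Psi u F := by
    rw [mul_div_assoc', div_le_iff₀ hcpos]
    have hn1 : (1 : ℝ) ≤ (n : ℝ) := by exact_mod_cast hn
    nlinarith [hPsi0]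
  linarith
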